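/- Let K be a field and let V ⊆ M_n(K) be a non-trivial linear subspace which is a union of L-classes (where A L B iff A and B have the same row space). Then V contains a matrix of rank 1. -/

import Mathlib

/-- The row space of a square matrix: the span of its rows. -/
def rowSpace {K : Type*} [Field K] {n : ℕ} (A : Matrix (Fin n) (Fin n) K) :
    Submodule K (Fin n → K) :=
  Submodule.span K (Set.range A)

/-- A non-trivial linear subspace of `M_n(K)` which is a union of `L`-classes
contains a matrix of rank 1. -/
theorem subspace_union_of_L_classes_contains_rank_one
    {K : Type*} [Field K] {n : ℕ}
    (V : Submodule K (Matrix (Fin n) (Fin n) K)) (hV : V ≠ ⊥)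
    (hL : ∀ A ∈ V, ∀ B : Matrix (Fin n) (Fin n) K,
      rowSpace B = rowSpace A → B ∈ V) :
    ∃ A ∈ V, A.rank = 1 := by
  classical
  obtain ⟨A, hA, hA0⟩ := Submodule.exists_mem_ne_zero_of_ne_bot hV
  -- find a nonzero row
  obtain ⟨i0, hi0⟩ : ∃ i0, A i0 ≠ 0 := by
    by_contra h
    push_neg at h
    exact hA0 (by ext i j; simp [h i])
  by_cases h : ∀ j, A j ∈ Submodule.span K {A i0}
  · -- all rows proportional to A i0 : A has rank 1
    refine ⟨A, hA, ?_⟩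
    have hspan : Submodule.span K (Set.range A) = Submodule.span K {A i0} := by
      apply le_antisymm
      · rw [Submodule.span_le]
        rintro _ ⟨j, rfl⟩
        exact h j
      · exact Submodule.span_mono (by
          rintro _ rfl
          exact ⟨i0, rfl⟩)
    rw [Matrix.rank_eq_finrank_span_row]; show Module.finrank K (Submodule.span K (Set.range A)) = 1; rw [hspan]
    exact finrank_span_singleton hi0
  · push_neg at h
    obtain ⟨j, hj⟩ := h
    have hji0 : j ≠ i0 := by
      rintro rfl
      exact hj (Submodule.mem_span_singleton_self _)
    set C : Matrix (Fin n) (Fin n) K := A.updateRow j (A j + A i0) with hC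
    have hCrow : ∀ k, C k = if k = j then A j + A i0 else A k := by
      intro k
      by_cases hk : k = j
      · subst hk; simp [hC]
      · simp [hC, Matrix.updateRow_ne hk, hk]
    have hrs : rowSpace C = rowSpace A := by
      unfold rowSpace
      apply le_antisymm
      · rw [Submodule.span_le]
        rintro _ ⟨k, rfl⟩
        rw [hCrow k]
        by_cases hk : k = j
        · simp only [hk, if_pos rfl]
          exact Submodule.add_mem _ (Submodule.subset_span ⟨j, rfl⟩)
            (Submodule.subset_span ⟨i0, rfl⟩)
        · simp only [if_neg hk]
          exact Submodule.subset_span ⟨k, rfl⟩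
      · rw [Submodule.span_le]
        rintro _ ⟨k, rfl⟩
        by_cases hk : k = j
        · rw [hk]
          have h1 : C j ∈ Submodule.span K (Set.range C) := Submodule.subset_span ⟨j, rfl⟩
          have h2 : C i0 ∈ Submodule.span K (Set.range C) := Submodule.subset_span ⟨i0, rfl⟩
          have e1 : C j = A j + A i0 := by rw [hCrow]; simp
          have e2 : C i0 = A i0 := by rw [hCrow]; simp [hji0.symm]
          have : A j = C j - C i0 := by rw [e1, e2]; abel
          rw [this]
          exact Submodule.sub_mem _ h1 h2
        · have : A k = C k := by rw [hCrow, if_neg hk]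
          rw [this]
          exact Submodule.subset_span ⟨k, rfl⟩
    have hCV : C ∈ V := hL A hA C hrs
    refine ⟨C - A, Submodule.sub_mem _ hCV hA, ?_⟩
    have hDrow : ∀ k, (C - A) k = if k = j then A i0 else 0 := by
      intro k
      have : (C - A) k = C k - A k := rfl
      rw [this, hCrow k]
      by_cases hk : k = j
      · subst hk; simp
      · simp [hk]
    have hspanD : Submodule.span K (Set.range (C - A)) = Submodule.span K {A i0} := by
      apply le_antisymm
      · rw [Submodule.span_le]
        rintro _ ⟨k, rfl⟩
        rw [hDrow k]
        by_cases hk : k = j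
        · simp only [if_pos hk]
          exact Submodule.mem_span_singleton_self _
        · simp [if_neg hk]
      · rw [Submodule.span_le]
        rintro _ rfl
        have : A i0 = (C - A) j := by rw [hDrow]; simp
        rw [this]
        exact Submodule.subset_span ⟨j, rfl⟩
    rw [Matrix.rank_eq_finrank_span_row]; show Module.finrank K (Submodule.span K (Set.range (C - A))) = 1; rw [hspanD]
    exact finrank_span_singleton hi0
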